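/- Let X be a compact metric space, f : X → X continuous, Y ⊆ X nonempty, n ≥ 2, and δ > 0. Then the set { (x_1,…,x_n) ∈ Y^n : S_f(x_1,…,x_n; δ) ∈ F } is a G_δ subset of Y^n for each F ∈ { F_ud1, F_iap*, F_infinite }, and the set ∩_{ε>0} { (x_1,…,x_n) ∈ Y^n : T_f(x_1,…,x_n; ε) ∈ F } is a G_δ subset of Y^n for each F ∈ { F_ud1, F_iap*, F_infinite }. -/

import Mathlib

open Filter Topology Metric Set

/-- The upper density of a set of natural numbers. -/
noncomputable def upperDensity (A : Set ℕ) : ℝ :=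
  Filter.limsup (fun n => ((A ∩ Set.Iio n).ncard : ℝ) / n) Filter.atTop

/-- The family of sets of upper density one. -/
def Fud1 : Set (Set ℕ) := {A | upperDensity A = 1}

/-- The family of thick sets. -/
def Fthick : Set (Set ℕ) :=
  {A | ∀ j : ℕ, 1 ≤ j → ∃ i : ℕ, ∀ l < j, i + l ∈ A}

/-- The dual of the family of sets containing an arithmetic progression:
sets meeting every progression `{p, p+m, p+2m, …}` with `m ≥ 1`. -/
def FiapStar : Set (Set ℕ) :=
  {A | ∀ p : ℕ, ∀ m : ℕ, 1 ≤ m → ∃ q : ℕ, p + q * m ∈ A}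

/-- The family of infinite sets. -/
def Finfinite : Set (Set ℕ) := {A | A.Infinite}

/-- `S_f(x₁,…,xₙ; r)` : times at which all pairs are more than `r` apart. -/
def Sset {X : Type*} [MetricSpace X] {n : ℕ} (f : X → X) (x : Fin n → X)
    (r : ℝ) : Set ℕ :=
  {i | ∀ j k : Fin n, j < k → r < dist (f^[i] (x j)) (f^[i] (x k))}

/-- `T_f(x₁,…,xₙ; r)` : times at which all pairs are less than `r` apart. -/
def Tset {X : Type*} [MetricSpace X] {n : ℕ} (f : X → X) (x : Fin n → X)
    (r : ℝ) : Set ℕ :=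
  {i | ∀ j k : Fin n, j < k → dist (f^[i] (x j)) (f^[i] (x k)) < r}

noncomputable def densAt (A : Set ℕ) (m : ℕ) : ℝ := ((A ∩ Set.Iio m).ncard : ℝ) / m

lemma densAt_nonneg (A : Set ℕ) (m : ℕ) : 0 ≤ densAt A m :=
  div_nonneg (Nat.cast_nonneg _) (Nat.cast_nonneg _)

lemma finite_inter_Iio (A : Set ℕ) (m : ℕ) : (A ∩ Set.Iio m).Finite :=
  (Set.finite_Iio m).subset Set.inter_subset_right

lemma ncard_inter_Iio_le (A : Set ℕ) (m : ℕ) : (A ∩ Set.Iio m).ncard ≤ m := by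
  calc (A ∩ Set.Iio m).ncard ≤ (Set.Iio m).ncard :=
        Set.ncard_le_ncard Set.inter_subset_right (Set.finite_Iio m)
    _ = m := by rw [← Finset.coe_Iio, Set.ncard_coe_finset, Nat.card_Iio]

lemma densAt_le_one (A : Set ℕ) (m : ℕ) : densAt A m ≤ 1 := by
  rcases Nat.eq_zero_or_pos m with h | h
  · simp [densAt, h]
  · rw [densAt, div_le_one (by exact_mod_cast h)]
    exact_mod_cast ncard_inter_Iio_le A m

lemma densAt_mono {A B : Set ℕ} (hAB : A ⊆ B) (m : ℕ) : densAt A m ≤ densAt B m := by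
  refine div_le_div_of_nonneg_right ?_ (Nat.cast_nonneg _)
  exact_mod_cast Set.ncard_le_ncard (Set.inter_subset_inter_left _ hAB) (finite_inter_Iio B m)

lemma upperDensity_eq_limsup (A : Set ℕ) :
    upperDensity A = Filter.limsup (densAt A) Filter.atTop := rfl

lemma isBoundedUnder_le_densAt (A : Set ℕ) :
    Filter.IsBoundedUnder (· ≤ ·) Filter.atTop (densAt A) :=
  Filter.isBoundedUnder_of ⟨1, densAt_le_one A⟩

lemma isBoundedUnder_ge_densAt (A : Set ℕ) :
    Filter.IsBoundedUnder (· ≥ ·) Filter.atTop (densAt A) :=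
  Filter.isBoundedUnder_of ⟨0, densAt_nonneg A⟩

lemma upperDensity_eq_one_iff (A : Set ℕ) :
    upperDensity A = 1 ↔ ∀ k N : ℕ, ∃ m : ℕ, 1 - 1/(k+1 : ℝ) < densAt A (N + m + 1) := by
  have hb := isBoundedUnder_le_densAt A
  have hb' := isBoundedUnder_ge_densAt A
  have hco : Filter.IsCoboundedUnder (· ≤ ·) Filter.atTop (densAt A) :=
    hb'.isCoboundedUnder_le
  have hco' : Filter.IsCoboundedUnder (· ≥ ·) Filter.atTop (densAt A) :=
    hb.isCoboundedUnder_ge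
  constructor
  · intro h k N
    have hc : (1 - 1/(k+1 : ℝ)) < Filter.limsup (densAt A) Filter.atTop := by
      rw [← upperDensity_eq_limsup, h]
      have : (0:ℝ) < 1/(k+1) := by positivity
      linarith
    have := frequently_lt_of_lt_limsup hco hc
    rw [Filter.frequently_atTop] at this
    obtain ⟨m, hm, hm'⟩ := this (N+1)
    exact ⟨m - (N+1), by rwa [show N + (m - (N+1)) + 1 = m by omega]⟩
  · intro h
    rw [upperDensity_eq_limsup]
    have h1 : Filter.limsup (densAt A) Filter.atTop ≤ 1 :=
      Filter.limsup_le_of_le hco (Filter.Eventually.of_forall (densAt_le_one A))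
    have h2 : ∀ k : ℕ, 1 - 1/(k+1:ℝ) ≤ Filter.limsup (densAt A) Filter.atTop := by
      intro k
      apply le_limsup_of_frequently_le _ hb
      rw [Filter.frequently_atTop]
      intro N
      obtain ⟨m, hm⟩ := h k N
      exact ⟨N + m + 1, by omega, hm.le⟩
    have h3 : (1:ℝ) ≤ Filter.limsup (densAt A) Filter.atTop := by
      have ht : Filter.Tendsto (fun k : ℕ => 1 - 1/(k+1:ℝ)) Filter.atTop (𝓝 1) := by
        have h0 := tendsto_one_div_add_atTop_nhds_zero_nat (𝕜 := ℝ)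
        simpa using (tendsto_const_nhds (x := (1:ℝ))).sub h0
      exact le_of_tendsto' ht h2
    linarith

lemma Fud1_mono {A B : Set ℕ} (hAB : A ⊆ B) (hA : A ∈ Fud1) : B ∈ Fud1 := by
  have h1 : upperDensity B ≤ 1 :=
    Filter.limsup_le_of_le (isBoundedUnder_ge_densAt B).isCoboundedUnder_le
      (Filter.Eventually.of_forall (densAt_le_one B))
  have h2 : upperDensity A ≤ upperDensity B :=
    Filter.limsup_le_limsup (Filter.Eventually.of_forall (densAt_mono hAB))
      (isBoundedUnder_ge_densAt A).isCoboundedUnder_le (isBoundedUnder_le_densAt B)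
  have hA' : upperDensity A = 1 := hA
  exact le_antisymm h1 (hA' ▸ h2)

lemma FiapStar_mono {A B : Set ℕ} (hAB : A ⊆ B) (hA : A ∈ FiapStar) : B ∈ FiapStar := by
  intro p m hm
  obtain ⟨q, hq⟩ := hA p m hm
  exact ⟨q, hAB hq⟩

lemma mem_FiapStar_iff (A : Set ℕ) :
    A ∈ FiapStar ↔ ∀ p m : ℕ, ∃ q : ℕ, p + q * (m+1) ∈ A := by
  constructor
  · intro h p m
    exact h p (m+1) (Nat.succ_le_succ (Nat.zero_le m))
  · intro h p m hm
    obtain ⟨m', rfl⟩ : ∃ m', m = m' + 1 := ⟨m - 1, by omega⟩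
    exact h p m'

lemma mem_Finfinite_iff (A : Set ℕ) : A ∈ Finfinite ↔ ∀ N : ℕ, ∃ i : ℕ, N + i ∈ A := by
  constructor
  · intro h N
    by_contra hc
    push_neg at hc
    apply h ((Set.finite_Iio N).subset ?_)
    intro a ha
    simp only [Set.mem_Iio]
    by_contra hN
    exact hc (a - N) (by rwa [show N + (a - N) = a by omega])
  · intro h hfin
    obtain ⟨b, hb⟩ := hfin.bddAbove
    obtain ⟨i, hi⟩ := h (b+1)
    have := hb hi
    omega

section Generic

variable {α : Type*} [TopologicalSpace α] (A : α → Set ℕ)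

lemma isOpen_densAt (hA : ∀ i, IsOpen {x : α | i ∈ A x}) (m : ℕ) (c : ℝ) :
    IsOpen {x : α | c < densAt (A x) m} := by
  have heq : {x : α | c < densAt (A x) m} =
      ⋃ (B : Finset ℕ) (_ : (↑B : Set ℕ) ⊆ Set.Iio m ∧ c < (B.card : ℝ) / m),
        ⋂ i ∈ B, {x : α | i ∈ A x} := by
    ext x
    simp only [Set.mem_setOf_eq, Set.mem_iUnion, Set.mem_iInter]
    constructor
    · intro hx
      have hfin := finite_inter_Iio (A x) m
      refine ⟨hfin.toFinset, ⟨?_, ?_⟩, ?_⟩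
      · rw [hfin.coe_toFinset]; exact Set.inter_subset_right
      · rwa [← Set.ncard_eq_toFinset_card _ hfin]
      · intro i hi
        rw [hfin.mem_toFinset] at hi
        exact hi.1
    · rintro ⟨B, ⟨hB1, hB2⟩, hB3⟩
      have hsub : (↑B : Set ℕ) ⊆ A x ∩ Set.Iio m := fun i hi => ⟨hB3 i hi, hB1 hi⟩
      have hcard : (B.card : ℝ) ≤ (((A x) ∩ Set.Iio m).ncard : ℝ) := by
        have := Set.ncard_le_ncard hsub (finite_inter_Iio _ m)
        rw [Set.ncard_coe_finset] at this
        exact_mod_cast this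
      calc c < (B.card : ℝ) / m := hB2
        _ ≤ densAt (A x) m := div_le_div_of_nonneg_right hcard (Nat.cast_nonneg _)
  rw [heq]
  exact isOpen_iUnion fun B => isOpen_iUnion fun _ =>
    isOpen_biInter_finset fun i _ => hA i

lemma isGδ_mem_Fud1 (hA : ∀ i, IsOpen {x : α | i ∈ A x}) :
    IsGδ {x : α | A x ∈ Fud1} := by
  have heq : {x : α | A x ∈ Fud1} =
      ⋂ (k : ℕ) (N : ℕ), ⋃ (m : ℕ),
        {x : α | 1 - 1/(k+1:ℝ) < densAt (A x) (N + m + 1)} := by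
    ext x
    simp only [Set.mem_iInter, Set.mem_iUnion, Set.mem_setOf_eq]
    exact upperDensity_eq_one_iff (A x)
  rw [heq]
  exact .iInter fun k => .iInter fun N =>
    (isOpen_iUnion fun m => isOpen_densAt A hA _ _).isGδ

lemma isGδ_mem_FiapStar (hA : ∀ i, IsOpen {x : α | i ∈ A x}) :
    IsGδ {x : α | A x ∈ FiapStar} := by
  have heq : {x : α | A x ∈ FiapStar} =
      ⋂ (p : ℕ) (m : ℕ), ⋃ (q : ℕ), {x : α | p + q * (m+1) ∈ A x} := by
    ext x
    simp only [Set.mem_iInter, Set.mem_iUnion, Set.mem_setOf_eq]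
    exact mem_FiapStar_iff (A x)
  rw [heq]
  exact .iInter fun p => .iInter fun m =>
    (isOpen_iUnion fun q => hA _).isGδ

lemma isGδ_mem_Finfinite (hA : ∀ i, IsOpen {x : α | i ∈ A x}) :
    IsGδ {x : α | A x ∈ Finfinite} := by
  have heq : {x : α | A x ∈ Finfinite} =
      ⋂ (N : ℕ), ⋃ (i : ℕ), {x : α | N + i ∈ A x} := by
    ext x
    simp only [Set.mem_iInter, Set.mem_iUnion, Set.mem_setOf_eq]
    exact mem_Finfinite_iff (A x)
  rw [heq]
  exact .iInter fun N => (isOpen_iUnion fun i => hA _).isGδ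

end Generic

lemma Tset_mono {X : Type*} [MetricSpace X] {n : ℕ} (f : X → X) (x : Fin n → X)
    {ε ε' : ℝ} (h : ε ≤ ε') : Tset f x ε ⊆ Tset f x ε' := by
  intro i hi j k hjk
  exact lt_of_lt_of_le (hi j k hjk) h

/-- For each of the families `F_ud1`, `F_iap*`, `F_infinite`, the corresponding
sets of tuples form Gδ subsets of `Yⁿ`. -/
theorem stmt15 {X : Type*} [MetricSpace X] [CompactSpace X]
    (f : X → X) (hf : Continuous f) (Y : Set X) (hY : Y.Nonempty)
    (n : ℕ) (hn : 2 ≤ n) (δ : ℝ) (hδ : 0 < δ) :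
    ∀ F ∈ ({Fud1, FiapStar, Finfinite} : Set (Set (Set ℕ))),
      IsGδ {x : Fin n → Y | Sset f (fun j => (x j : X)) δ ∈ F} ∧
      IsGδ {x : Fin n → Y | ∀ ε > 0, Tset f (fun j => (x j : X)) ε ∈ F} := by
  have hc : ∀ (i : ℕ) (j : Fin n), Continuous fun x : Fin n → Y => f^[i] (x j : X) :=
    fun i j => (hf.iterate i).comp (continuous_subtype_val.comp (continuous_apply j))
  have hS : ∀ i, IsOpen {x : Fin n → Y | i ∈ Sset f (fun j => (x j : X)) δ} := by
    intro i
    have heq : {x : Fin n → Y | i ∈ Sset f (fun j => (x j : X)) δ} =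
        ⋂ (j : Fin n) (k : Fin n),
          {x : Fin n → Y | j < k → δ < dist (f^[i] (x j : X)) (f^[i] (x k : X))} := by
      ext x
      simp only [Sset, Set.mem_setOf_eq, Set.mem_iInter]
    rw [heq]
    refine isOpen_iInter_of_finite fun j => isOpen_iInter_of_finite fun k => ?_
    by_cases hjk : j < k
    · simp only [hjk, true_implies]
      exact isOpen_lt continuous_const ((hc i j).dist (hc i k))
    · simp [hjk]
  have hT : ∀ (ε : ℝ) (i : ℕ),
      IsOpen {x : Fin n → Y | i ∈ Tset f (fun j => (x j : X)) ε} := by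
    intro ε i
    have heq : {x : Fin n → Y | i ∈ Tset f (fun j => (x j : X)) ε} =
        ⋂ (j : Fin n) (k : Fin n),
          {x : Fin n → Y | j < k → dist (f^[i] (x j : X)) (f^[i] (x k : X)) < ε} := by
      ext x
      simp only [Tset, Set.mem_setOf_eq, Set.mem_iInter]
    rw [heq]
    refine isOpen_iInter_of_finite fun j => isOpen_iInter_of_finite fun k => ?_
    by_cases hjk : j < k
    · simp only [hjk, true_implies]
      exact isOpen_lt ((hc i j).dist (hc i k)) continuous_const
    · simp [hjk]
  have hTGδ : ∀ (F : Set (Set ℕ)), (∀ {A B : Set ℕ}, A ⊆ B → A ∈ F → B ∈ F) →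
      (∀ ε : ℝ, IsGδ {x : Fin n → Y | Tset f (fun j => (x j : X)) ε ∈ F}) →
      IsGδ {x : Fin n → Y | ∀ ε > 0, Tset f (fun j => (x j : X)) ε ∈ F} := by
    intro F hmono hGδ
    have heq : {x : Fin n → Y | ∀ ε > 0, Tset f (fun j => (x j : X)) ε ∈ F} =
        ⋂ (k : ℕ), {x : Fin n → Y | Tset f (fun j => (x j : X)) (1/(k+1:ℝ)) ∈ F} := by
      ext x
      simp only [Set.mem_setOf_eq, Set.mem_iInter]
      constructor
      · intro h k
        exact h _ (by positivity)
      · intro h ε hε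
        obtain ⟨k, hk⟩ := exists_nat_one_div_lt hε
        exact hmono (Tset_mono f _ hk.le) (h k)
    rw [heq]
    exact .iInter fun k => hGδ _
  intro F hF
  simp only [Set.mem_insert_iff, Set.mem_singleton_iff] at hF
  rcases hF with rfl | rfl | rfl
  · exact ⟨isGδ_mem_Fud1 _ hS,
      hTGδ _ (fun h hA => Fud1_mono h hA) (fun ε => isGδ_mem_Fud1 _ (hT ε))⟩
  · exact ⟨isGδ_mem_FiapStar _ hS,
      hTGδ _ (fun h hA => FiapStar_mono h hA) (fun ε => isGδ_mem_FiapStar _ (hT ε))⟩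
  · exact ⟨isGδ_mem_Finfinite _ hS,
      hTGδ _ (fun h hA => hA.mono h) (fun ε => isGδ_mem_Finfinite _ (hT ε))⟩
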